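/- Define Q(m) = ((4m−6)·(8m−20)!) / (3·2^{8m−21}·((4m−10)!)²) for integers m ≥ 4. Then Q(4) = 385/256 > 1, and Q(m+1)/Q(m) > 1 for all m ≥ 4; hence Q(m) > 1 for all m ≥ 4. -/
import Mathlib

lemma fact_add8 (n : ℕ) : Nat.factorial (n+8) =
    (n+8)*(n+7)*(n+6)*(n+5)*(n+4)*(n+3)*(n+2)*(n+1)*Nat.factorial n := by
  simp [Nat.factorial_succ]; ring

lemma fact_add4 (n : ℕ) : Nat.factorial (n+4) =
    (n+4)*(n+3)*(n+2)*(n+1)*Nat.factorial n := by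
  simp [Nat.factorial_succ]; ring

lemma core (k : ℕ) :
    (4*k+10)*256*((4*k+7)*(4*k+8)*(4*k+9)*(4*k+10))^2
      < (4*k+14)*((8*k+13)*(8*k+14)*(8*k+15)*(8*k+16)*(8*k+17)*(8*k+18)*(8*k+19)*(8*k+20)) := by
  have h : (4*k+14)*((8*k+13)*(8*k+14)*(8*k+15)*(8*k+16)*(8*k+17)*(8*k+18)*(8*k+19)*(8*k+20))
      = (4*k+10)*256*((4*k+7)*(4*k+8)*(4*k+9)*(4*k+10))^2
        + (6079449600 + 26451989760*k + 49584242688*k^2 + 52431162368*k^3 + 34269888512*k^4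
          + 14197735424*k^5 + 3644850176*k^6 + 530579456*k^7 + 33554432*k^8) := by ring
  rw [h]
  exact Nat.lt_add_of_pos_right (by positivity)



/-- Q(m) = ((4m−6)·(8m−20)!) / (3·2^{8m−21}·((4m−10)!)²). -/
noncomputable def Qratio (m : ℕ) : ℝ :=
  ((4 * m - 6) * Nat.factorial (8 * m - 20) : ℝ)
    / (3 * 2 ^ (8 * m - 21) * ((Nat.factorial (4 * m - 10) : ℝ)) ^ 2)

/-- Q(4) = 385/256 > 1, Q(m+1)/Q(m) > 1 for all m ≥ 4, and hence Q(m) > 1 for all m ≥ 4. -/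
lemma Qform (k : ℕ) : Qratio (k+4) =
    ((4*k+10) * Nat.factorial (8*k+12) : ℝ) / (3 * 2^(8*k+11) * ((Nat.factorial (4*k+6) : ℝ))^2) := by
  have e1 : 4*(k+4)-6 = 4*k+10 := by omega
  have e2 : 8*(k+4)-20 = 8*k+12 := by omega
  have e3 : 8*(k+4)-21 = 8*k+11 := by omega
  have e4 : 4*(k+4)-10 = 4*k+6 := by omega
  rw [Qratio, e2, e3, e4]
  push_cast
  ring

lemma Qpos (k : ℕ) : 0 < Qratio (k+4) := by
  rw [Qform]
  have h1 := Nat.factorial_pos (8*k+12)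
  have h2 := Nat.factorial_pos (4*k+6)
  positivity

lemma Qstep (k : ℕ) : Qratio (k+4) < Qratio (k+4+1) := by
  have h5 : k+4+1 = (k+1)+4 := by ring
  rw [h5, Qform, Qform]
  have hF : (0:ℝ) < (Nat.factorial (8*k+12) : ℝ) := by exact_mod_cast Nat.factorial_pos _
  have hG : (0:ℝ) < (Nat.factorial (4*k+6) : ℝ) := by exact_mod_cast Nat.factorial_pos _
  have hT : (0:ℝ) < (2:ℝ)^(8*k+11) := by positivity
  have hD1 : (0:ℝ) < 3 * 2^(8*k+11) * ((Nat.factorial (4*k+6) : ℝ))^2 := by positivity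
  have e8 : 8*(k+1)+12 = (8*k+12)+8 := by ring
  have e4 : 4*(k+1)+6 = (4*k+6)+4 := by ring
  have e2 : 8*(k+1)+11 = (8*k+11)+8 := by ring
  rw [e8, e4, e2, fact_add8 (8*k+12), fact_add4 (4*k+6), pow_add (2:ℝ) (8*k+11) 8]
  have hD2 : (0:ℝ) < 3 * ((2:ℝ)^(8*k+11) * 2^8) *
      ((((4*k+6:ℕ)+4)*((4*k+6:ℕ)+3)*((4*k+6:ℕ)+2)*((4*k+6:ℕ)+1)*Nat.factorial (4*k+6) : ℕ) : ℝ)^2 := by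
    have h2 := Nat.factorial_pos (4*k+6)
    positivity
  rw [div_lt_div_iff₀ hD1 hD2]
  have hcore : ((4*k+10)*256*((4*k+7)*(4*k+8)*(4*k+9)*(4*k+10))^2 : ℝ)
      < ((4*k+14)*((8*k+13)*(8*k+14)*(8*k+15)*(8*k+16)*(8*k+17)*(8*k+18)*(8*k+19)*(8*k+20)) : ℝ) := by
    exact_mod_cast core k
  have hfac : (0:ℝ) < 3 * (2:ℝ)^(8*k+11) * (Nat.factorial (8*k+12) : ℝ)
      * ((Nat.factorial (4*k+6) : ℝ))^2 := by positivity
  have h := mul_lt_mul_of_pos_left hcore hfac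
  push_cast
  push_cast at h
  refine lt_of_le_of_lt (le_of_eq ?_) (lt_of_lt_of_le h (le_of_eq ?_)) <;> ring

theorem stmt_5 :
    (Qratio 4 = 385 / 256 ∧ (1 : ℝ) < 385 / 256) ∧
    (∀ m : ℕ, 4 ≤ m → 1 < Qratio (m + 1) / Qratio m) ∧
    (∀ m : ℕ, 4 ≤ m → 1 < Qratio m) := by
  have hQ4 : Qratio 4 = 385 / 256 := by
    have := Qform 0
    norm_num [Nat.factorial] at this
    norm_num [this]
  have hall : ∀ m : ℕ, 4 ≤ m → 1 < Qratio m := by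
    intro m hm
    induction m, hm using Nat.le_induction with
    | base => rw [hQ4]; norm_num
    | succ n hn ih =>
      obtain ⟨k, rfl⟩ := Nat.exists_eq_add_of_le hn
      exact ih.trans (by simpa [Nat.add_comm 4 k] using Qstep k)
  refine ⟨⟨hQ4, by norm_num⟩, ?_, hall⟩
  intro m hm
  obtain ⟨k, rfl⟩ := Nat.exists_eq_add_of_le hm
  have hpos : 0 < Qratio (4 + k) := by simpa [Nat.add_comm 4 k] using Qpos k
  rw [lt_div_iff₀ hpos, one_mul]
  simpa [Nat.add_comm 4 k] using Qstep k
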